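/- The distribution spanned by X₁, X₂, X₃, X₄ is bracket generating of step 2: at every point p ∈ ℝ⁵, the vectors X₁(p), X₂(p), X₃(p), X₄(p) together with [X₁,X₂](p) span all of ℝ⁵. -/
import Mathlib


/- Coordinates on ℝ⁵: index 0 = G, 1 = I, 2 = E, 3 = P, 4 = Q. -/

/-- `X₁ = ∂/∂I`. -/
noncomputable def X₁ : (Fin 5 → ℝ) → (Fin 5 → ℝ) := fun _ => Pi.single 1 1

/-- `X₂ = I ∂/∂G + ∂/∂E`. -/
noncomputable def X₂ : (Fin 5 → ℝ) → (Fin 5 → ℝ) :=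
  fun x => (x 1) • (Pi.single 0 1 : Fin 5 → ℝ) + Pi.single 2 1

/-- `X₃ = ∂/∂P`. -/
noncomputable def X₃ : (Fin 5 → ℝ) → (Fin 5 → ℝ) := fun _ => Pi.single 3 1

/-- `X₄ = ∂/∂Q − P ∂/∂G`. -/
noncomputable def X₄ : (Fin 5 → ℝ) → (Fin 5 → ℝ) :=
  fun x => (Pi.single 4 1 : Fin 5 → ℝ) - (x 3) • (Pi.single 0 1 : Fin 5 → ℝ)

/-- `X₅ = ∂/∂G`. -/
noncomputable def X₅ : (Fin 5 → ℝ) → (Fin 5 → ℝ) := fun _ => Pi.single 0 1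

/-- Lie bracket of vector fields on ℝ⁵, viewed as smooth maps `V : ℝ⁵ → ℝ⁵`:
`[V,W](x) = DW(x)·V(x) − DV(x)·W(x)`. -/
noncomputable def lieBracket (V W : (Fin 5 → ℝ) → (Fin 5 → ℝ)) :
    (Fin 5 → ℝ) → (Fin 5 → ℝ) :=
  fun x => fderiv ℝ W x (V x) - fderiv ℝ V x (W x)


lemma bracket12 (p : Fin 5 → ℝ) : lieBracket X₁ X₂ p = Pi.single 0 1 := by
  have hL : HasFDerivAt X₂
      ((ContinuousLinearMap.proj (1 : Fin 5) :
        (Fin 5 → ℝ) →L[ℝ] ℝ).smulRight (Pi.single 0 1 : Fin 5 → ℝ)) p := by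
    have := (((ContinuousLinearMap.proj (1 : Fin 5) :
        (Fin 5 → ℝ) →L[ℝ] ℝ).smulRight (Pi.single 0 1 : Fin 5 → ℝ)).hasFDerivAt
        (x := p)).add_const (Pi.single 2 1 : Fin 5 → ℝ)
    exact this
  have h1 : fderiv ℝ X₁ p = 0 := fderiv_const_apply _
  simp [lieBracket, hL.fderiv, h1, X₁]

/-- The distribution spanned by `X₁, X₂, X₃, X₄` is bracket generating of step 2:
at every point `p` of ℝ⁵, the vectors `X₁(p), X₂(p), X₃(p), X₄(p)` together
with `[X₁,X₂](p)` span all of ℝ⁵. -/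
theorem roegen_distribution_bracket_generating (p : Fin 5 → ℝ) :
    Submodule.span ℝ {X₁ p, X₂ p, X₃ p, X₄ p, lieBracket X₁ X₂ p} = ⊤ := by
  set S := Submodule.span ℝ {X₁ p, X₂ p, X₃ p, X₄ p, lieBracket X₁ X₂ p} with hS
  have hb := bracket12 p
  have mem : ∀ v ∈ ({X₁ p, X₂ p, X₃ p, X₄ p, lieBracket X₁ X₂ p} :
      Set (Fin 5 → ℝ)), v ∈ S := fun v hv => Submodule.subset_span hv
  have h0 : (Pi.single 0 1 : Fin 5 → ℝ) ∈ S := by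
    rw [← hb]; exact mem _ (by simp)
  have h1 : (Pi.single 1 1 : Fin 5 → ℝ) ∈ S := mem _ (by left; rfl)
  have h2 : (Pi.single 2 1 : Fin 5 → ℝ) ∈ S := by
    have hx2 : X₂ p ∈ S := mem _ (by right; left; rfl)
    have : (Pi.single 2 1 : Fin 5 → ℝ) = X₂ p - (p 1) • (Pi.single 0 1 : Fin 5 → ℝ) := by
      simp [X₂]
    rw [this]; exact sub_mem hx2 (S.smul_mem _ h0)
  have h3 : (Pi.single 3 1 : Fin 5 → ℝ) ∈ S := mem _ (by right; right; left; rfl)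
  have h4 : (Pi.single 4 1 : Fin 5 → ℝ) ∈ S := by
    have hx4 : X₄ p ∈ S := mem _ (by right; right; right; left; rfl)
    have : (Pi.single 4 1 : Fin 5 → ℝ) = X₄ p + (p 3) • (Pi.single 0 1 : Fin 5 → ℝ) := by
      simp [X₄]
    rw [this]; exact add_mem hx4 (S.smul_mem _ h0)
  rw [eq_top_iff]
  rintro v -
  have hv : v = ∑ i : Fin 5, v i • (Pi.single i 1 : Fin 5 → ℝ) := by
    funext j
    simp [Finset.sum_apply, Pi.single_apply]
  rw [hv]
  refine Submodule.sum_mem S fun i _ => S.smul_mem _ ?_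
  fin_cases i <;> assumption
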